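/- Consider the two-cluster extended model (u,e¹,e²) on a finite connected graph 𝒢=(V,E) with nonempty boundary ∂⊆V and weight w, with boundary condition 1, assuming max(0,p_{xy}+q_{xy}−1) ≤ c_{xy} ≤ min(p_{xy},q_{xy}) pointwise. For z∈V and i∈{1,2}, define the map σ̄_i^z(u,e¹,e²) = (σ_i^z(u), e¹, e²), where σ_i^z(u) = u if the cluster C_i^z of z in the bonds eⁱ contains a boundary vertex, and otherwise σ_i^z(u)_y = R_i(u_y) for every y∈C_i^z and σ_i^z(u)_y = u_y for y∉C_i^z. Then σ̄_1^z and σ̄_2^z preserve the joint law of (u,e¹,e²). -/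

import Mathlib

open MeasureTheory Real

noncomputable section

instance : Fact (0 < 2 * π) := ⟨by positivity⟩

noncomputable instance : MeasureSpace Real.Angle :=
  (inferInstance : MeasureSpace (AddCircle (2 * π)))

/-- The spin space: the unit circle, represented by angles in `ℝ/2πℤ`. -/
abbrev Spin : Type := Real.Angle

/-- A weight function for an O(2) model, expressed through angles:
`w(e^{iθ₁}, e^{iθ₂}) = W(θ₁ - θ₂)`.  Rotation invariance is automatic; symmetry
and reflection invariance of `w` correspond to `W` being even, and the
monotonicity assumption on `θ ↦ w(1, e^{iθ})` corresponds to `W` being strictly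
decreasing on `[0, π]`. -/
structure IsWeight (W : Spin → ℝ) : Prop where
  pos : ∀ s, 0 < W s
  even : ∀ s, W (-s) = W s
  cont : Continuous W
  anti : StrictAntiOn (fun x : ℝ => W (x : Spin)) (Set.Icc 0 π)

variable {V : Type} [Fintype V] [LinearOrder V]

/-- Base measure on spin configurations: boundary spins are fixed to `1`
(angle `0`), the other spins get the Haar measure of the circle. -/
def spinBase (B : Finset V) : Measure (V → Spin) :=
  Measure.pi fun v => if v ∈ B then Measure.dirac (0 : Spin) else volume

/-- Density of the spin measure. -/
def spinDensity (G : SimpleGraph V) [DecidableRel G.Adj] (W : Spin → ℝ) (θ : V → Spin) : ENNReal :=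
  ∏ e ∈ G.edgeFinset, ENNReal.ofReal (W (θ e.inf - θ e.sup))

/-- One-cluster bond opening probability
`p(u₁,u₂) = (1 - w(R u₁, u₂)/w(u₁,u₂)) 1_{Re u₁ · Re u₂ > 0}`, where `R z = -conj z`. -/
def pBond (W : Spin → ℝ) (u₁ u₂ : Spin) : ℝ :=
  if 0 < u₁.cos * u₂.cos then 1 - W (((π : ℝ) : Spin) - (u₁ + u₂)) / W (u₁ - u₂) else 0

/-- Two-cluster model: opening probability for bonds of the first family,
associated with the reflection `R₁ z = ξ² conj z`, `ξ = e^{iπ/4}`. -/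
def pBond2 (W : Spin → ℝ) (u₁ u₂ : Spin) : ℝ :=
  if 0 < (u₁ + ((π / 4 : ℝ) : Spin)).cos * (u₂ + ((π / 4 : ℝ) : Spin)).cos then
    1 - W (((π / 2 : ℝ) : Spin) - (u₁ + u₂)) / W (u₁ - u₂) else 0

/-- Two-cluster model: opening probability for bonds of the second family,
associated with the reflection `R₂ z = conj(ξ)² conj z`. -/
def qBond2 (W : Spin → ℝ) (u₁ u₂ : Spin) : ℝ :=
  if 0 < (u₁ - ((π / 4 : ℝ) : Spin)).cos * (u₂ - ((π / 4 : ℝ) : Spin)).cos then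
    1 - W (((-(π / 2) : ℝ) : Spin) - (u₁ + u₂)) / W (u₁ - u₂) else 0

/-- Two-cluster model: probability that both bonds are open. -/
def cBond2 (W : Spin → ℝ) (u₁ u₂ : Spin) : ℝ :=
  if 0 < (u₁ - ((π / 4 : ℝ) : Spin)).cos * (u₂ - ((π / 4 : ℝ) : Spin)).cos ∧
      0 < (u₁ + ((π / 4 : ℝ) : Spin)).cos * (u₂ + ((π / 4 : ℝ) : Spin)).cos then
    1 - (W (((π / 2 : ℝ) : Spin) - (u₁ + u₂)) + W (((-(π / 2) : ℝ) : Spin) - (u₁ + u₂))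
        - W (((π : ℝ) : Spin) + (u₁ - u₂))) / W (u₁ - u₂)
  else 0

/-- Conditional weight of a one-cluster bond configuration given the spins. -/
def bondWeight1 (G : SimpleGraph V) [DecidableRel G.Adj] (W : Spin → ℝ) (θ : V → Spin)
    (b : Sym2 V → Bool) : ENNReal :=
  ∏ e ∈ G.edgeFinset,
    ENNReal.ofReal (if b e then pBond W (θ e.inf) (θ e.sup) else 1 - pBond W (θ e.inf) (θ e.sup))

/-- Joint weight for a pair of bonds with marginals `Ber(p)`, `Ber(q)` and
`P(both open) = c`. -/
def pairWeight (p q c : ℝ) : Bool → Bool → ℝ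
  | true, true => c
  | true, false => p - c
  | false, true => q - c
  | false, false => 1 - p - q + c

/-- Conditional weight of a two-cluster bond configuration given the spins. -/
def bondWeight2 (G : SimpleGraph V) [DecidableRel G.Adj] (W : Spin → ℝ) (θ : V → Spin)
    (b : (Sym2 V → Bool) × (Sym2 V → Bool)) : ENNReal :=
  ∏ e ∈ G.edgeFinset,
    ENNReal.ofReal (pairWeight (pBond2 W (θ e.inf) (θ e.sup)) (qBond2 W (θ e.inf) (θ e.sup))
      (cBond2 W (θ e.inf) (θ e.sup)) (b.1 e) (b.2 e))

/-- Unnormalized one-cluster extended measure. -/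
def extAux1 (G : SimpleGraph V) [DecidableRel G.Adj] (W : Spin → ℝ) (B : Finset V) :
    Measure ((V → Spin) × (Sym2 V → Bool)) :=
  ((spinBase B).prod Measure.count).withDensity fun ω =>
    spinDensity G W ω.1 * bondWeight1 G W ω.1 ω.2

/-- The one-cluster extended model `(u, e)`: spins with density
`∏_{(xy)∈E} w(u_x,u_y)` and boundary condition `1`, together with bonds that
are open independently with probability `p(u_x,u_y)` given the spins. -/
def extP1 (G : SimpleGraph V) [DecidableRel G.Adj] (W : Spin → ℝ) (B : Finset V) :
    Measure ((V → Spin) × (Sym2 V → Bool)) :=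
  (extAux1 G W B Set.univ)⁻¹ • extAux1 G W B

/-- Unnormalized two-cluster extended measure. -/
def extAux2 (G : SimpleGraph V) [DecidableRel G.Adj] (W : Spin → ℝ) (B : Finset V) :
    Measure ((V → Spin) × ((Sym2 V → Bool) × (Sym2 V → Bool))) :=
  ((spinBase B).prod Measure.count).withDensity fun ω =>
    spinDensity G W ω.1 * bondWeight2 G W ω.1 ω.2

/-- The two-cluster extended model `(u, e¹, e²)`. -/
def extP2 (G : SimpleGraph V) [DecidableRel G.Adj] (W : Spin → ℝ) (B : Finset V) :
    Measure ((V → Spin) × ((Sym2 V → Bool) × (Sym2 V → Bool))) :=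
  (extAux2 G W B Set.univ)⁻¹ • extAux2 G W B

/-- The graph of open bonds. -/
def openGraph (G : SimpleGraph V) (b : Sym2 V → Bool) : SimpleGraph V where
  Adj u v := G.Adj u v ∧ b s(u, v) = true
  symm := ⟨fun u v h => ⟨h.1.symm, by rw [Sym2.eq_swap]; exact h.2⟩⟩
  loopless := ⟨fun u h => G.loopless.irrefl u h.1⟩

/-- `x` is joined to the boundary `B` by a path of open bonds. -/
def connToBdry (G : SimpleGraph V) (B : Finset V) (x : V) (b : Sym2 V → Bool) : Prop :=
  ∃ v ∈ B, (openGraph G b).Reachable x v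

end

noncomputable section

open scoped Classical in
/-- The swapping map `σ̄_i^z` of the two-cluster extended model, for a
reflection `r` of the circle and the bond family selected by `sel`: if the
cluster of `z` in the selected bonds touches the boundary, do nothing,
otherwise apply `r` to every spin of that cluster.  Bonds are unchanged. -/
def flipMap2 {V : Type} [Fintype V] [LinearOrder V] (G : SimpleGraph V) (B : Finset V) (z : V)
    (r : Spin → Spin) (sel : (Sym2 V → Bool) × (Sym2 V → Bool) → Sym2 V → Bool)
    (ω : (V → Spin) × ((Sym2 V → Bool) × (Sym2 V → Bool))) :
    (V → Spin) × ((Sym2 V → Bool) × (Sym2 V → Bool)) :=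
  if ∃ v ∈ B, (openGraph G (sel ω.2)).Reachable z v then ω
  else (fun y => if (openGraph G (sel ω.2)).Reachable z y then r (ω.1 y) else ω.1 y, ω.2)


-- ========================================================================
-- Auxiliary lemmas
-- ========================================================================

instance : BorelSpace Spin := inferInstanceAs (BorelSpace (AddCircle (2 * π)))

instance : SecondCountableTopology Spin :=
  inferInstanceAs (SecondCountableTopology (AddCircle (2 * π)))

instance : (volume : Measure Spin).IsAddHaarMeasure :=
  inferInstanceAs ((volume : Measure (AddCircle (2 * π))).IsAddHaarMeasure)

instance : (volume : Measure Spin).IsNegInvariant :=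
  inferInstanceAs ((volume : Measure (AddCircle (2 * π))).IsNegInvariant)

instance : IsFiniteMeasure (volume : Measure Spin) :=
  inferInstanceAs (IsFiniteMeasure (volume : Measure (AddCircle (2 * π))))

instance : NullSingletonClass (volume : Measure Spin) := by
  constructor
  intro x
  induction x using Real.Angle.induction_on with | h x₀ =>
  have hmp := AddCircle.measurePreserving_mk (2 * π) 0
  have hpre : ((↑) : ℝ → AddCircle (2 * π)) ⁻¹' {((x₀ : ℝ) : Spin)} ⊆
      Set.range fun k : ℤ => x₀ + 2 * π * k := by
    intro y hy
    have : ((y : ℝ) : Spin) = ((x₀ : ℝ) : Spin) := hy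
    obtain ⟨k, hk⟩ := Real.Angle.angle_eq_iff_two_pi_dvd_sub.1 this
    refine ⟨k, ?_⟩
    show x₀ + 2 * π * (k : ℝ) = y
    linarith
  have h0 : (volume : Measure ℝ) (((↑) : ℝ → AddCircle (2 * π)) ⁻¹' {((x₀ : ℝ) : Spin)}) = 0 :=
    measure_mono_null hpre ((Set.countable_range _).measure_zero _)
  have := hmp.measure_preimage
    (s := {((x₀ : ℝ) : Spin)}) (measurableSet_singleton _).nullMeasurableSet
  show (volume : Measure (AddCircle (2 * π))) {((x₀ : ℝ) : Spin)} = 0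
  rw [← this]
  refine le_antisymm ?_ (by simp)
  rw [Measure.restrict_apply' measurableSet_Ioc]
  exact le_trans (measure_mono Set.inter_subset_left) h0.le

-- ### helpers

lemma spin_eq {x y : ℝ} (k : ℤ) (h : x - y = 2 * π * k) : ((x : ℝ) : Spin) = ((y : ℝ) : Spin) :=
  Real.Angle.angle_eq_iff_two_pi_dvd_sub.2 ⟨k, h⟩

lemma weven {W : Spin → ℝ} (hW : IsWeight W) (u v : Spin) (h : u = -v) : W u = W v := by
  rw [h, hW.even]

-- symmetry of bonds
lemma wsub_comm {W : Spin → ℝ} (hW : IsWeight W) (u v : Spin) : W (u - v) = W (v - u) := by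
  rw [show u - v = -(v - u) by abel, hW.even]

lemma pBond2_comm {W : Spin → ℝ} (hW : IsWeight W) (u v : Spin) :
    pBond2 W u v = pBond2 W v u := by
  unfold pBond2
  rw [mul_comm, add_comm u v, wsub_comm hW u v]

lemma qBond2_comm {W : Spin → ℝ} (hW : IsWeight W) (u v : Spin) :
    qBond2 W u v = qBond2 W v u := by
  unfold qBond2
  rw [mul_comm, add_comm u v, wsub_comm hW u v]

lemma cBond2_comm {W : Spin → ℝ} (hW : IsWeight W) (u v : Spin) :
    cBond2 W u v = cBond2 W v u := by
  unfold cBond2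
  rw [mul_comm, add_comm u v, wsub_comm hW u v,
    weven hW (((π : ℝ) : Spin) + (u - v)) (((π : ℝ) : Spin) + (v - u))]
  · rw [mul_comm (Angle.cos (u + _)) _]
  · rw [show -(((π : ℝ) : Spin) + (v - u)) = ((-π : ℝ) : Spin) + (u - v) by
      rw [Real.Angle.coe_neg]; abel]
    congr 1
    exact spin_eq 1 (by ring)

-- ### both-endpoints flipped, reflection R₁ : u ↦ π/2 - u

lemma wsub_flip1 {W : Spin → ℝ} (hW : IsWeight W) (u v : Spin) :
    W ((((π/2:ℝ):Spin) - u) - (((π/2:ℝ):Spin) - v)) = W (u - v) := by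
  rw [show (((π/2:ℝ):Spin) - u) - (((π/2:ℝ):Spin) - v) = -(u - v) by abel, hW.even]

lemma pBond2_flip1 {W : Spin → ℝ} (hW : IsWeight W) (u v : Spin) :
    pBond2 W (((π/2:ℝ):Spin) - u) (((π/2:ℝ):Spin) - v) = pBond2 W u v := by
  unfold pBond2
  induction u using Real.Angle.induction_on with | h x =>
  induction v using Real.Angle.induction_on with | h y =>
  simp only [← Real.Angle.coe_sub, ← Real.Angle.coe_add, fun t => (Real.Angle.cos_coe t).symm.symm]
  rw [show (π/2 - x + π/4 : ℝ) = π - (x + π/4) by ring,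
    show (π/2 - y + π/4 : ℝ) = π - (y + π/4) by ring,
    Real.cos_pi_sub, Real.cos_pi_sub, neg_mul_neg,
    show (π/2 - (π/2 - x + (π/2 - y)) : ℝ) = -(π/2 - (x + y)) by ring,
    show (π/2 - x - (π/2 - y) : ℝ) = -(x - y) by ring,
    Real.Angle.coe_neg, Real.Angle.coe_neg, hW.even, hW.even]

lemma qBond2_flip1 {W : Spin → ℝ} (hW : IsWeight W) (u v : Spin) :
    qBond2 W (((π/2:ℝ):Spin) - u) (((π/2:ℝ):Spin) - v) = qBond2 W u v := by
  unfold qBond2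
  induction u using Real.Angle.induction_on with | h x =>
  induction v using Real.Angle.induction_on with | h y =>
  simp only [← Real.Angle.coe_sub, ← Real.Angle.coe_add, fun t => (Real.Angle.cos_coe t).symm.symm]
  rw [show (π/2 - x - π/4 : ℝ) = -(x - π/4) by ring,
    show (π/2 - y - π/4 : ℝ) = -(y - π/4) by ring, Real.cos_neg, Real.cos_neg,
    show ((-(π/2) - (π/2 - x + (π/2 - y)) : ℝ) : Spin) = ((π/2 + (x + y) : ℝ) : Spin) from
      spin_eq (-1) (by ring),
    show (π/2 + (x + y) : ℝ) = -(-(π/2) - (x + y)) by ring,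
    show (π/2 - x - (π/2 - y) : ℝ) = -(x - y) by ring,
    Real.Angle.coe_neg, Real.Angle.coe_neg, hW.even, hW.even]

lemma cBond2_flip1 {W : Spin → ℝ} (hW : IsWeight W) (u v : Spin) :
    cBond2 W (((π/2:ℝ):Spin) - u) (((π/2:ℝ):Spin) - v) = cBond2 W u v := by
  unfold cBond2
  induction u using Real.Angle.induction_on with | h x =>
  induction v using Real.Angle.induction_on with | h y =>
  simp only [← Real.Angle.coe_sub, ← Real.Angle.coe_add, fun t => (Real.Angle.cos_coe t).symm.symm]
  rw [show (π/2 - x - π/4 : ℝ) = -(x - π/4) by ring,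
    show (π/2 - y - π/4 : ℝ) = -(y - π/4) by ring, Real.cos_neg, Real.cos_neg,
    show (π/2 - x + π/4 : ℝ) = π - (x + π/4) by ring,
    show (π/2 - y + π/4 : ℝ) = π - (y + π/4) by ring,
    Real.cos_pi_sub, Real.cos_pi_sub, neg_mul_neg,
    show (π/2 - (π/2 - x + (π/2 - y)) : ℝ) = -(π/2 - (x + y)) by ring,
    show ((-(π/2) - (π/2 - x + (π/2 - y)) : ℝ) : Spin) = ((π/2 + (x + y) : ℝ) : Spin) from
      spin_eq (-1) (by ring),
    show (π/2 + (x + y) : ℝ) = -(-(π/2) - (x + y)) by ring,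
    show ((π + (π/2 - x - (π/2 - y)) : ℝ) : Spin) = ((-(π + (x - y)) : ℝ) : Spin) from
      spin_eq 1 (by ring),
    show (π/2 - x - (π/2 - y) : ℝ) = -(x - y) by ring]
  simp only [Real.Angle.coe_neg, hW.even]

-- ### both-endpoints flipped, reflection R₂ : u ↦ -π/2 - u

lemma wsub_flip2 {W : Spin → ℝ} (hW : IsWeight W) (u v : Spin) :
    W ((((-(π/2):ℝ):Spin) - u) - (((-(π/2):ℝ):Spin) - v)) = W (u - v) := by
  rw [show (((-(π/2):ℝ):Spin) - u) - (((-(π/2):ℝ):Spin) - v) = -(u - v) by abel, hW.even]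

lemma pBond2_flip2 {W : Spin → ℝ} (hW : IsWeight W) (u v : Spin) :
    pBond2 W (((-(π/2):ℝ):Spin) - u) (((-(π/2):ℝ):Spin) - v) = pBond2 W u v := by
  unfold pBond2
  induction u using Real.Angle.induction_on with | h x =>
  induction v using Real.Angle.induction_on with | h y =>
  simp only [← Real.Angle.coe_sub, ← Real.Angle.coe_add, fun t => (Real.Angle.cos_coe t).symm.symm]
  rw [show (-(π/2) - x + π/4 : ℝ) = -(x + π/4) by ring,
    show (-(π/2) - y + π/4 : ℝ) = -(y + π/4) by ring, Real.cos_neg, Real.cos_neg,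
    show ((π/2 - (-(π/2) - x + (-(π/2) - y)) : ℝ) : Spin) = ((x + y - π/2 : ℝ) : Spin) from
      spin_eq 1 (by ring),
    show (x + y - π/2 : ℝ) = -(π/2 - (x + y)) by ring,
    show (-(π/2) - x - (-(π/2) - y) : ℝ) = -(x - y) by ring,
    Real.Angle.coe_neg, Real.Angle.coe_neg, hW.even, hW.even]

lemma qBond2_flip2 {W : Spin → ℝ} (hW : IsWeight W) (u v : Spin) :
    qBond2 W (((-(π/2):ℝ):Spin) - u) (((-(π/2):ℝ):Spin) - v) = qBond2 W u v := by
  unfold qBond2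
  induction u using Real.Angle.induction_on with | h x =>
  induction v using Real.Angle.induction_on with | h y =>
  simp only [← Real.Angle.coe_sub, ← Real.Angle.coe_add, fun t => (Real.Angle.cos_coe t).symm.symm]
  rw [show (-(π/2) - x - π/4 : ℝ) = -((x - π/4) + π) by ring,
    show (-(π/2) - y - π/4 : ℝ) = -((y - π/4) + π) by ring,
    Real.cos_neg, Real.cos_neg, Real.cos_add_pi, Real.cos_add_pi, neg_mul_neg,
    show (-(π/2) - (-(π/2) - x + (-(π/2) - y)) : ℝ) = -(-(π/2) - (x + y)) by ring,
    show (-(π/2) - x - (-(π/2) - y) : ℝ) = -(x - y) by ring,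
    Real.Angle.coe_neg, Real.Angle.coe_neg, hW.even, hW.even]

lemma cBond2_flip2 {W : Spin → ℝ} (hW : IsWeight W) (u v : Spin) :
    cBond2 W (((-(π/2):ℝ):Spin) - u) (((-(π/2):ℝ):Spin) - v) = cBond2 W u v := by
  unfold cBond2
  induction u using Real.Angle.induction_on with | h x =>
  induction v using Real.Angle.induction_on with | h y =>
  simp only [← Real.Angle.coe_sub, ← Real.Angle.coe_add, fun t => (Real.Angle.cos_coe t).symm.symm]
  rw [show (-(π/2) - x - π/4 : ℝ) = -((x - π/4) + π) by ring,
    show (-(π/2) - y - π/4 : ℝ) = -((y - π/4) + π) by ring,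
    Real.cos_neg, Real.cos_neg, Real.cos_add_pi, Real.cos_add_pi, neg_mul_neg,
    show (-(π/2) - x + π/4 : ℝ) = -(x + π/4) by ring,
    show (-(π/2) - y + π/4 : ℝ) = -(y + π/4) by ring, Real.cos_neg, Real.cos_neg,
    show ((π/2 - (-(π/2) - x + (-(π/2) - y)) : ℝ) : Spin) = ((x + y - π/2 : ℝ) : Spin) from
      spin_eq 1 (by ring),
    show (x + y - π/2 : ℝ) = -(π/2 - (x + y)) by ring,
    show (-(π/2) - (-(π/2) - x + (-(π/2) - y)) : ℝ) = -(-(π/2) - (x + y)) by ring,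
    show ((π + (-(π/2) - x - (-(π/2) - y)) : ℝ) : Spin) = ((-(π + (x - y)) : ℝ) : Spin) from
      spin_eq 1 (by ring),
    show (-(π/2) - x - (-(π/2) - y) : ℝ) = -(x - y) by ring]
  simp only [Real.Angle.coe_neg, hW.even]

-- ### one endpoint flipped, reflection R₁, the selected bond (first family) closed

lemma oneflip1 {W : Spin → ℝ} (hW : IsWeight W) (u v : Spin)
    (hu : (u + ((π/4:ℝ):Spin)).cos ≠ 0) (hv : (v + ((π/4:ℝ):Spin)).cos ≠ 0) (bb : Bool) :
    W ((((π/2:ℝ):Spin) - u) - v) *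
      pairWeight (pBond2 W (((π/2:ℝ):Spin) - u) v) (qBond2 W (((π/2:ℝ):Spin) - u) v)
        (cBond2 W (((π/2:ℝ):Spin) - u) v) false bb
    = W (u - v) * pairWeight (pBond2 W u v) (qBond2 W u v) (cBond2 W u v) false bb := by
  unfold pBond2 qBond2 cBond2
  induction u using Real.Angle.induction_on with | h x =>
  induction v using Real.Angle.induction_on with | h y =>
  simp only [← Real.Angle.coe_sub, ← Real.Angle.coe_add, fun t => (Real.Angle.cos_coe t).symm.symm] at hu hv ⊢
  rw [show (π/2 - x + π/4 : ℝ) = π - (x + π/4) by ring, Real.cos_pi_sub,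
    show (π/2 - x - π/4 : ℝ) = -(x - π/4) by ring, Real.cos_neg,
    show (π/2 - (π/2 - x + y) : ℝ) = x - y by ring,
    show ((-(π/2) - (π/2 - x + y) : ℝ) : Spin) = ((π + (x - y) : ℝ) : Spin) from
      spin_eq (-1) (by ring),
    show ((π + (π/2 - x - y) : ℝ) : Spin) = ((-(π/2) - (x + y) : ℝ) : Spin) from
      spin_eq 1 (by ring),
    show (π/2 - x - y : ℝ) = π/2 - (x + y) by ring, neg_mul]
  set A := W ((x - y : ℝ) : Spin) with hA'
  set P := W ((π/2 - (x + y) : ℝ) : Spin) with hP'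
  set Q := W ((-(π/2) - (x + y) : ℝ) : Spin) with hQ'
  set M := W ((π + (x - y) : ℝ) : Spin) with hM'
  have hA : 0 < A := hW.pos _
  have hP : 0 < P := hW.pos _
  set a := Real.cos (x + π/4) with ha
  set b' := Real.cos (y + π/4) with hb'
  set s := Real.cos (x - π/4) with hs
  set t := Real.cos (y - π/4) with htt
  rcases (mul_ne_zero hu hv).lt_or_gt with h | h <;> by_cases ht : 0 < s * t
  · have e1 : (0 < -(a * b')) = True := eq_true (by linarith)
    have e2 : (0 < a * b') = False := eq_false (by linarith)
    have e3 : (0 < s * t) = True := eq_true ht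
    cases bb <;> simp only [pairWeight, e1, e2, e3, if_true, if_false, true_and, and_true,
      false_and, and_false] <;> (field_simp; try ring)
  · have e1 : (0 < -(a * b')) = True := eq_true (by linarith)
    have e2 : (0 < a * b') = False := eq_false (by linarith)
    have e3 : (0 < s * t) = False := eq_false ht
    cases bb <;> simp only [pairWeight, e1, e2, e3, if_true, if_false, true_and, and_true,
      false_and, and_false] <;> (field_simp; try ring)
  · have e1 : (0 < -(a * b')) = False := eq_false (by simp; nlinarith)
    have e2 : (0 < a * b') = True := eq_true h
    have e3 : (0 < s * t) = True := eq_true ht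
    cases bb <;> simp only [pairWeight, e1, e2, e3, if_true, if_false, true_and, and_true,
      false_and, and_false] <;> (field_simp; try ring)
  · have e1 : (0 < -(a * b')) = False := eq_false (by simp; nlinarith)
    have e2 : (0 < a * b') = True := eq_true h
    have e3 : (0 < s * t) = False := eq_false ht
    cases bb <;> simp only [pairWeight, e1, e2, e3, if_true, if_false, true_and, and_true,
      false_and, and_false] <;> (field_simp; try ring)

-- ### one endpoint flipped, reflection R₂, the selected bond (second family) closed

lemma oneflip2 {W : Spin → ℝ} (hW : IsWeight W) (u v : Spin)
    (hu : (u - ((π/4:ℝ):Spin)).cos ≠ 0) (hv : (v - ((π/4:ℝ):Spin)).cos ≠ 0) (bb : Bool) :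
    W ((((-(π/2):ℝ):Spin) - u) - v) *
      pairWeight (pBond2 W (((-(π/2):ℝ):Spin) - u) v) (qBond2 W (((-(π/2):ℝ):Spin) - u) v)
        (cBond2 W (((-(π/2):ℝ):Spin) - u) v) bb false
    = W (u - v) * pairWeight (pBond2 W u v) (qBond2 W u v) (cBond2 W u v) bb false := by
  unfold pBond2 qBond2 cBond2
  induction u using Real.Angle.induction_on with | h x =>
  induction v using Real.Angle.induction_on with | h y =>
  simp only [← Real.Angle.coe_sub, ← Real.Angle.coe_add, fun t => (Real.Angle.cos_coe t).symm.symm] at hu hv ⊢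
  rw [show (-(π/2) - x + π/4 : ℝ) = -(x + π/4) by ring, Real.cos_neg,
    show (-(π/2) - x - π/4 : ℝ) = -((x - π/4) + π) by ring, Real.cos_neg, Real.cos_add_pi,
    show (π/2 - (-(π/2) - x + y) : ℝ) = π + (x - y) by ring,
    show (-(π/2) - (-(π/2) - x + y) : ℝ) = x - y by ring,
    show (π + (-(π/2) - x - y) : ℝ) = π/2 - (x + y) by ring,
    show (-(π/2) - x - y : ℝ) = -(π/2) - (x + y) by ring,
    show (π/2 - (x + y) : ℝ) = π/2 - (x + y) by ring, neg_mul]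
  set A := W ((x - y : ℝ) : Spin) with hA'
  set P := W ((π/2 - (x + y) : ℝ) : Spin) with hP'
  set Q := W ((-(π/2) - (x + y) : ℝ) : Spin) with hQ'
  set M := W ((π + (x - y) : ℝ) : Spin) with hM'
  have hA : 0 < A := hW.pos _
  have hQ : 0 < Q := hW.pos _
  set a := Real.cos (x + π/4) with ha
  set b' := Real.cos (y + π/4) with hb'
  set s := Real.cos (x - π/4) with hs
  set t := Real.cos (y - π/4) with htt
  rcases (mul_ne_zero hu hv).lt_or_gt with h | h <;> by_cases ht : 0 < a * b'
  · have e1 : (0 < -(s * t)) = True := eq_true (by linarith)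
    have e2 : (0 < s * t) = False := eq_false (by linarith)
    have e3 : (0 < a * b') = True := eq_true ht
    cases bb <;> simp only [pairWeight, e1, e2, e3, if_true, if_false, true_and, and_true,
      false_and, and_false] <;> (field_simp; try ring)
  · have e1 : (0 < -(s * t)) = True := eq_true (by linarith)
    have e2 : (0 < s * t) = False := eq_false (by linarith)
    have e3 : (0 < a * b') = False := eq_false ht
    cases bb <;> simp only [pairWeight, e1, e2, e3, if_true, if_false, true_and, and_true,
      false_and, and_false] <;> (field_simp; try ring)
  · have e1 : (0 < -(s * t)) = False := eq_false (by simp; nlinarith)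
    have e2 : (0 < s * t) = True := eq_true h
    have e3 : (0 < a * b') = True := eq_true ht
    cases bb <;> simp only [pairWeight, e1, e2, e3, if_true, if_false, true_and, and_true,
      false_and, and_false] <;> (field_simp; try ring)
  · have e1 : (0 < -(s * t)) = False := eq_false (by simp; nlinarith)
    have e2 : (0 < s * t) = True := eq_true h
    have e3 : (0 < a * b') = False := eq_false ht
    cases bb <;> simp only [pairWeight, e1, e2, e3, if_true, if_false, true_and, and_true,
      false_and, and_false] <;> (field_simp; try ring)


-- ### graph helpers

section GraphAux

variable {V : Type} [Fintype V] [LinearOrder V]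

lemma sym2_mk_inf_sup (e : Sym2 V) : s(e.inf, e.sup) = e := by
  induction e using Sym2.ind with | _ a b =>
  rcases le_total a b with h | h
  · rw [Sym2.inf_mk, Sym2.sup_mk, min_eq_left h, max_eq_right h]
  · rw [Sym2.inf_mk, Sym2.sup_mk, min_eq_right h, max_eq_left h,
      Sym2.eq_swap]

lemma adj_inf_sup {G : SimpleGraph V} [DecidableRel G.Adj] {e : Sym2 V}
    (he : e ∈ G.edgeFinset) : G.Adj e.inf e.sup := by
  rw [SimpleGraph.mem_edgeFinset] at he
  have := he
  rw [← sym2_mk_inf_sup e, SimpleGraph.mem_edgeSet] at this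
  exact this

end GraphAux

-- ### generic lemmas about `flipMap2`

section FlipAux

variable {V : Type} [Fintype V] [LinearOrder V] (G : SimpleGraph V) [DecidableRel G.Adj]
  (B : Finset V) (z : V) (r : Spin → Spin)
  (sel : (Sym2 V → Bool) × (Sym2 V → Bool) → Sym2 V → Bool)

lemma flipMap2_snd (ω : (V → Spin) × ((Sym2 V → Bool) × (Sym2 V → Bool))) :
    (flipMap2 G B z r sel ω).2 = ω.2 := by
  unfold flipMap2; split_ifs <;> rfl

lemma flipMap2_invol (hr : ∀ u, r (r u) = u)
    (ω : (V → Spin) × ((Sym2 V → Bool) × (Sym2 V → Bool))) :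
    flipMap2 G B z r sel (flipMap2 G B z r sel ω) = ω := by
  unfold flipMap2
  by_cases h : ∃ v ∈ B, (openGraph G (sel ω.2)).Reachable z v
  · rw [if_pos h, if_pos h]
  · rw [if_neg h]
    dsimp only
    rw [if_neg h]
    refine Prod.ext ?_ rfl
    funext y
    dsimp only
    by_cases hy : (openGraph G (sel ω.2)).Reachable z y
    · rw [if_pos hy, if_pos hy, hr]
    · rw [if_neg hy, if_neg hy]

lemma flipMap2_measurable (hrm : Measurable r) :
    Measurable (flipMap2 G B z r sel) := by
  classical
  apply measurable_from_prod_countable_left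
  intro b
  by_cases h : ∃ v ∈ B, (openGraph G (sel b)).Reachable z v
  · have : (fun θ : V → Spin => flipMap2 G B z r sel (θ, b)) = fun θ => (θ, b) := by
      funext θ; unfold flipMap2; dsimp only; rw [if_pos h]
    rw [this]
    exact measurable_id.prodMk measurable_const
  · have : (fun θ : V → Spin => flipMap2 G B z r sel (θ, b)) =
        fun θ => (fun y => if (openGraph G (sel b)).Reachable z y then r (θ y) else θ y, b) := by
      funext θ; unfold flipMap2; dsimp only; rw [if_neg h]
    rw [this]
    refine Measurable.prodMk ?_ measurable_const
    refine measurable_pi_lambda _ fun y => ?_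
    by_cases hy : (openGraph G (sel b)).Reachable z y
    · simp only [if_pos hy]; exact hrm.comp (measurable_pi_apply y)
    · simp only [if_neg hy]; exact measurable_pi_apply y

lemma flipMap2_base_mp (hrm : Measurable r)
    (hrvol : MeasurePreserving r (volume : Measure Spin) volume) :
    MeasurePreserving (flipMap2 G B z r sel)
      ((spinBase B).prod (Measure.count : Measure ((Sym2 V → Bool) × (Sym2 V → Bool))))
      ((spinBase B).prod Measure.count) := by
  classical
  haveI hSF : ∀ v : V, SigmaFinite (if v ∈ B then Measure.dirac (0 : Spin) else volume) :=
    fun v => by split_ifs <;> infer_instance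
  haveI : SigmaFinite (spinBase B) := by unfold spinBase; infer_instance
  set F : ((Sym2 V → Bool) × (Sym2 V → Bool)) → (V → Spin) → (V → Spin) :=
    fun b θ => (flipMap2 G B z r sel (θ, b)).1 with hF
  have hFm : Measurable (Function.uncurry F) := by
    have : Function.uncurry F = Prod.fst ∘ (flipMap2 G B z r sel) ∘ Prod.swap := rfl
    rw [this]
    exact measurable_fst.comp ((flipMap2_measurable G B z r sel hrm).comp measurable_swap)
  have hmap : ∀ b, Measure.map (F b) (spinBase B) = spinBase B := by
    intro b
    by_cases hb : ∃ v ∈ B, (openGraph G (sel b)).Reachable z v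
    · have : F b = id := by
        funext θ; simp only [hF]; unfold flipMap2; dsimp only; rw [if_pos hb]; rfl
      rw [this, Measure.map_id]
    · have hFb : F b = fun θ y =>
          if (openGraph G (sel b)).Reachable z y then r (θ y) else θ y := by
        funext θ; simp only [hF]; unfold flipMap2; dsimp only; rw [if_neg hb]
      rw [hFb]
      have hΦ : Measurable (fun (θ : V → Spin) y =>
          if (openGraph G (sel b)).Reachable z y then r (θ y) else θ y) := by
        refine measurable_pi_lambda _ fun y => ?_
        by_cases hy : (openGraph G (sel b)).Reachable z y
        · simp only [if_pos hy]; exact hrm.comp (measurable_pi_apply y)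
        · simp only [if_neg hy]; exact measurable_pi_apply y
      unfold spinBase
      refine (Measure.pi_eq fun s hs => ?_).symm
      rw [Measure.map_apply hΦ (MeasurableSet.univ_pi hs)]
      have hpre : (fun (θ : V → Spin) y =>
            if (openGraph G (sel b)).Reachable z y then r (θ y) else θ y) ⁻¹'
            (Set.pi Set.univ s)
          = Set.pi Set.univ fun y =>
              (fun u => if (openGraph G (sel b)).Reachable z y then r u else u) ⁻¹' s y := by
        ext θ
        simp only [Set.mem_preimage, Set.mem_univ_pi]
      rw [hpre, Measure.pi_pi]
      refine Finset.prod_congr rfl fun y _ => ?_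
      by_cases hy : (openGraph G (sel b)).Reachable z y
      · have hyB : y ∉ B := fun hmem => hb ⟨y, hmem, hy⟩
        simp only [if_pos hy, if_neg hyB]
        exact hrvol.measure_preimage (hs y).nullMeasurableSet
      · simp only [if_neg hy]
        rfl
  have hT' : MeasurePreserving
      (fun p : ((Sym2 V → Bool) × (Sym2 V → Bool)) × (V → Spin) => (p.1, F p.1 p.2))
      (Measure.count.prod (spinBase B)) (Measure.count.prod (spinBase B)) :=
    (MeasurePreserving.id _).skew_product hFm (Filter.Eventually.of_forall hmap)
  have hTeq : flipMap2 G B z r sel =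
      Prod.swap ∘ (fun p : ((Sym2 V → Bool) × (Sym2 V → Bool)) × (V → Spin) =>
        (p.1, F p.1 p.2)) ∘ Prod.swap := by
    funext ω
    refine Prod.ext rfl (flipMap2_snd G B z r sel ω)
  rw [hTeq]
  exact (Measure.measurePreserving_swap).comp (hT'.comp Measure.measurePreserving_swap)

end FlipAux

-- ### measurability of the density

section MeasAux

variable {V : Type} [Fintype V] [LinearOrder V]

lemma measurable_pBond2 {W : Spin → ℝ} (hW : IsWeight W) :
    Measurable fun x : Spin × Spin => pBond2 W x.1 x.2 := by
  unfold pBond2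
  refine Measurable.ite ?_ ?_ measurable_const
  · exact measurableSet_lt measurable_const
      (((Real.Angle.continuous_cos.comp (continuous_fst.add continuous_const)).mul
        (Real.Angle.continuous_cos.comp (continuous_snd.add continuous_const))).measurable)
  · exact measurable_const.sub (Measurable.div
      ((hW.cont.comp (continuous_const.sub (continuous_fst.add continuous_snd))).measurable)
      ((hW.cont.comp (continuous_fst.sub continuous_snd)).measurable))

lemma measurable_qBond2 {W : Spin → ℝ} (hW : IsWeight W) :
    Measurable fun x : Spin × Spin => qBond2 W x.1 x.2 := by
  unfold qBond2
  refine Measurable.ite ?_ ?_ measurable_const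
  · exact measurableSet_lt measurable_const
      (((Real.Angle.continuous_cos.comp (continuous_fst.sub continuous_const)).mul
        (Real.Angle.continuous_cos.comp (continuous_snd.sub continuous_const))).measurable)
  · exact measurable_const.sub (Measurable.div
      ((hW.cont.comp (continuous_const.sub (continuous_fst.add continuous_snd))).measurable)
      ((hW.cont.comp (continuous_fst.sub continuous_snd)).measurable))

lemma measurable_cBond2 {W : Spin → ℝ} (hW : IsWeight W) :
    Measurable fun x : Spin × Spin => cBond2 W x.1 x.2 := by
  unfold cBond2
  refine Measurable.ite ?_ ?_ measurable_const
  · refine MeasurableSet.inter ?_ ?_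
    · exact measurableSet_lt measurable_const
        (((Real.Angle.continuous_cos.comp (continuous_fst.sub continuous_const)).mul
          (Real.Angle.continuous_cos.comp (continuous_snd.sub continuous_const))).measurable)
    · exact measurableSet_lt measurable_const
        (((Real.Angle.continuous_cos.comp (continuous_fst.add continuous_const)).mul
          (Real.Angle.continuous_cos.comp (continuous_snd.add continuous_const))).measurable)
  · exact measurable_const.sub (Measurable.div
      ((((hW.cont.comp (continuous_const.sub (continuous_fst.add continuous_snd))).add
        (hW.cont.comp (continuous_const.sub (continuous_fst.add continuous_snd)))).sub
        (hW.cont.comp (continuous_const.add (continuous_fst.sub continuous_snd)))).measurable)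
      ((hW.cont.comp (continuous_fst.sub continuous_snd)).measurable))

lemma measurable_density (G : SimpleGraph V) [DecidableRel G.Adj] {W : Spin → ℝ}
    (hW : IsWeight W) :
    Measurable fun ω : (V → Spin) × ((Sym2 V → Bool) × (Sym2 V → Bool)) =>
      spinDensity G W ω.1 * bondWeight2 G W ω.1 ω.2 := by
  refine Measurable.mul ?_ ?_
  · unfold spinDensity
    refine Finset.measurable_prod _ fun e _ => ?_
    exact ENNReal.measurable_ofReal.comp (hW.cont.measurable.comp
      (((measurable_pi_apply e.inf).comp measurable_fst).sub
        ((measurable_pi_apply e.sup).comp measurable_fst)))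
  · unfold bondWeight2
    refine Finset.measurable_prod _ fun e _ => ?_
    apply measurable_from_prod_countable_left
    intro b
    have hx : Measurable fun θ : V → Spin => ((θ e.inf, θ e.sup) : Spin × Spin) :=
      (measurable_pi_apply e.inf).prodMk (measurable_pi_apply e.sup)
    have hp : Measurable fun θ : V → Spin => pBond2 W (θ e.inf) (θ e.sup) :=
      (measurable_pBond2 hW).comp hx
    have hq : Measurable fun θ : V → Spin => qBond2 W (θ e.inf) (θ e.sup) :=
      (measurable_qBond2 hW).comp hx
    have hcm : Measurable fun θ : V → Spin => cBond2 W (θ e.inf) (θ e.sup) :=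
      (measurable_cBond2 hW).comp hx
    refine ENNReal.measurable_ofReal.comp ?_
    have key : ∀ a d : Bool, Measurable fun θ : V → Spin =>
        pairWeight (pBond2 W (θ e.inf) (θ e.sup)) (qBond2 W (θ e.inf) (θ e.sup))
          (cBond2 W (θ e.inf) (θ e.sup)) a d := by
      intro a d
      cases a <;> cases d <;> simp only [pairWeight]
      · exact ((measurable_const.sub hp).sub hq).add hcm
      · exact hq.sub hcm
      · exact hp.sub hcm
      · exact hcm
    exact key (b.1 e) (b.2 e)

end MeasAux


-- ### density invariance and the a.e. good set

section DensityAux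

variable {V : Type} [Fintype V] [LinearOrder V]

lemma ofReal_pair {w1 w2 p1 p2 : ℝ} (hw1 : 0 ≤ w1) (hw2 : 0 ≤ w2) (h : w1 * p1 = w2 * p2) :
    ENNReal.ofReal w1 * ENNReal.ofReal p1 = ENNReal.ofReal w2 * ENNReal.ofReal p2 := by
  rw [← ENNReal.ofReal_mul hw1, ← ENNReal.ofReal_mul hw2, h]

lemma oneflip1' {W : Spin → ℝ} (hW : IsWeight W) (u v : Spin)
    (hu : (u + ((π/4:ℝ):Spin)).cos ≠ 0) (hv : (v + ((π/4:ℝ):Spin)).cos ≠ 0) (bb : Bool) :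
    W (u - (((π/2:ℝ):Spin) - v)) *
      pairWeight (pBond2 W u (((π/2:ℝ):Spin) - v)) (qBond2 W u (((π/2:ℝ):Spin) - v))
        (cBond2 W u (((π/2:ℝ):Spin) - v)) false bb
    = W (u - v) * pairWeight (pBond2 W u v) (qBond2 W u v) (cBond2 W u v) false bb := by
  rw [wsub_comm hW u (((π/2:ℝ):Spin) - v), pBond2_comm hW u (((π/2:ℝ):Spin) - v),
    qBond2_comm hW u (((π/2:ℝ):Spin) - v), cBond2_comm hW u (((π/2:ℝ):Spin) - v),
    wsub_comm hW u v, pBond2_comm hW u v, qBond2_comm hW u v, cBond2_comm hW u v]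
  exact oneflip1 hW v u hv hu bb

lemma oneflip2' {W : Spin → ℝ} (hW : IsWeight W) (u v : Spin)
    (hu : (u - ((π/4:ℝ):Spin)).cos ≠ 0) (hv : (v - ((π/4:ℝ):Spin)).cos ≠ 0) (bb : Bool) :
    W (u - (((-(π/2):ℝ):Spin) - v)) *
      pairWeight (pBond2 W u (((-(π/2):ℝ):Spin) - v)) (qBond2 W u (((-(π/2):ℝ):Spin) - v))
        (cBond2 W u (((-(π/2):ℝ):Spin) - v)) bb false
    = W (u - v) * pairWeight (pBond2 W u v) (qBond2 W u v) (cBond2 W u v) bb false := by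
  rw [wsub_comm hW u (((-(π/2):ℝ):Spin) - v), pBond2_comm hW u (((-(π/2):ℝ):Spin) - v),
    qBond2_comm hW u (((-(π/2):ℝ):Spin) - v), cBond2_comm hW u (((-(π/2):ℝ):Spin) - v),
    wsub_comm hW u v, pBond2_comm hW u v, qBond2_comm hW u v, cBond2_comm hW u v]
  exact oneflip2 hW v u hv hu bb

lemma density_flip1 (G : SimpleGraph V) [DecidableRel G.Adj] (B : Finset V) (z : V)
    {W : Spin → ℝ} (hW : IsWeight W) (θ : V → Spin)
    (hθ : ∀ y : V, ((θ y) + ((π/4:ℝ):Spin)).cos ≠ 0)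
    (b : (Sym2 V → Bool) × (Sym2 V → Bool)) :
    spinDensity G W (flipMap2 G B z (fun u => ((π/2:ℝ):Spin) - u) Prod.fst (θ, b)).1 *
      bondWeight2 G W (flipMap2 G B z (fun u => ((π/2:ℝ):Spin) - u) Prod.fst (θ, b)).1 b =
    spinDensity G W θ * bondWeight2 G W θ b := by
  classical
  unfold flipMap2
  dsimp only
  by_cases h : ∃ v ∈ B, (openGraph G b.1).Reachable z v
  · rw [if_pos h]
  · rw [if_neg h]
    dsimp only
    unfold spinDensity bondWeight2
    rw [← Finset.prod_mul_distrib, ← Finset.prod_mul_distrib]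
    refine Finset.prod_congr rfl fun e he => ?_
    have hadj := adj_inf_sup he
    have hmk := sym2_mk_inf_sup e
    dsimp only
    by_cases h1 : (openGraph G b.1).Reachable z e.inf <;>
      by_cases h2 : (openGraph G b.1).Reachable z e.sup
    · rw [if_pos h1, if_pos h2, wsub_flip1 hW, pBond2_flip1 hW, qBond2_flip1 hW, cBond2_flip1 hW]
    · have hb : b.1 e = false := by
        cases hbe : b.1 e
        · rfl
        · exact absurd
            (h1.trans (SimpleGraph.Adj.reachable
              (⟨hadj, by rw [hmk, hbe]⟩ : (openGraph G b.1).Adj e.inf e.sup))) h2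
      rw [if_pos h1, if_neg h2, hb]
      exact ofReal_pair (hW.pos _).le (hW.pos _).le
        (oneflip1 hW (θ e.inf) (θ e.sup) (hθ e.inf) (hθ e.sup) (b.2 e))
    · have hb : b.1 e = false := by
        cases hbe : b.1 e
        · rfl
        · exact absurd
            (h2.trans (SimpleGraph.Adj.reachable
              (⟨hadj.symm, by rw [Sym2.eq_swap, hmk, hbe]⟩ :
                (openGraph G b.1).Adj e.sup e.inf))) h1
      rw [if_neg h1, if_pos h2, hb]
      exact ofReal_pair (hW.pos _).le (hW.pos _).le
        (oneflip1' hW (θ e.inf) (θ e.sup) (hθ e.inf) (hθ e.sup) (b.2 e))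
    · rw [if_neg h1, if_neg h2]

lemma density_flip2 (G : SimpleGraph V) [DecidableRel G.Adj] (B : Finset V) (z : V)
    {W : Spin → ℝ} (hW : IsWeight W) (θ : V → Spin)
    (hθ : ∀ y : V, ((θ y) - ((π/4:ℝ):Spin)).cos ≠ 0)
    (b : (Sym2 V → Bool) × (Sym2 V → Bool)) :
    spinDensity G W (flipMap2 G B z (fun u => ((-(π/2):ℝ):Spin) - u) Prod.snd (θ, b)).1 *
      bondWeight2 G W (flipMap2 G B z (fun u => ((-(π/2):ℝ):Spin) - u) Prod.snd (θ, b)).1 b =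
    spinDensity G W θ * bondWeight2 G W θ b := by
  classical
  unfold flipMap2
  dsimp only
  by_cases h : ∃ v ∈ B, (openGraph G b.2).Reachable z v
  · rw [if_pos h]
  · rw [if_neg h]
    dsimp only
    unfold spinDensity bondWeight2
    rw [← Finset.prod_mul_distrib, ← Finset.prod_mul_distrib]
    refine Finset.prod_congr rfl fun e he => ?_
    have hadj := adj_inf_sup he
    have hmk := sym2_mk_inf_sup e
    dsimp only
    by_cases h1 : (openGraph G b.2).Reachable z e.inf <;>
      by_cases h2 : (openGraph G b.2).Reachable z e.sup
    · rw [if_pos h1, if_pos h2, wsub_flip2 hW, pBond2_flip2 hW, qBond2_flip2 hW, cBond2_flip2 hW]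
    · have hb : b.2 e = false := by
        cases hbe : b.2 e
        · rfl
        · exact absurd
            (h1.trans (SimpleGraph.Adj.reachable
              (⟨hadj, by rw [hmk, hbe]⟩ : (openGraph G b.2).Adj e.inf e.sup))) h2
      rw [if_pos h1, if_neg h2, hb]
      exact ofReal_pair (hW.pos _).le (hW.pos _).le
        (oneflip2 hW (θ e.inf) (θ e.sup) (hθ e.inf) (hθ e.sup) (b.1 e))
    · have hb : b.2 e = false := by
        cases hbe : b.2 e
        · rfl
        · exact absurd
            (h2.trans (SimpleGraph.Adj.reachable
              (⟨hadj.symm, by rw [Sym2.eq_swap, hmk, hbe]⟩ :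
                (openGraph G b.2).Adj e.sup e.inf))) h1
      rw [if_neg h1, if_pos h2, hb]
      exact ofReal_pair (hW.pos _).le (hW.pos _).le
        (oneflip2' hW (θ e.inf) (θ e.sup) (hθ e.inf) (hθ e.sup) (b.1 e))
    · rw [if_neg h1, if_neg h2]

lemma good_ae (B : Finset V) :
    ∀ᵐ ω ∂((spinBase B).prod
        (Measure.count : Measure ((Sym2 V → Bool) × (Sym2 V → Bool)))),
      ∀ y : V, ((ω.1 y) + ((π/4:ℝ):Spin)).cos ≠ 0 ∧ ((ω.1 y) - ((π/4:ℝ):Spin)).cos ≠ 0 := by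
  classical
  haveI hSF : ∀ v : V, SigmaFinite (if v ∈ B then Measure.dirac (0 : Spin) else volume) :=
    fun v => by split_ifs <;> infer_instance
  have hcos : ∀ c : Spin, Measurable fun u : Spin => (u + c).cos :=
    fun c => (Real.Angle.continuous_cos.comp (continuous_id.add continuous_const)).measurable
  have hcos' : ∀ c : Spin, Measurable fun u : Spin => (u - c).cos :=
    fun c => (Real.Angle.continuous_cos.comp (continuous_id.sub continuous_const)).measurable
  set bad : Set Spin :=
    {u : Spin | (u + ((π/4:ℝ):Spin)).cos = 0 ∨ (u - ((π/4:ℝ):Spin)).cos = 0} with hbad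
  have hbadmeas : MeasurableSet bad :=
    ((hcos _ (measurableSet_singleton 0))).union ((hcos' _ (measurableSet_singleton 0)))
  have hbadnull : ∀ y : V,
      (if y ∈ B then Measure.dirac (0 : Spin) else volume) bad = 0 := by
    intro y
    by_cases hyB : y ∈ B
    · rw [if_pos hyB, Measure.dirac_apply' _ hbadmeas]
      have h0 : (0 : Spin) ∉ bad := by
        simp only [hbad, Set.mem_setOf_eq, zero_add, zero_sub, ← Real.Angle.coe_neg,
          Real.Angle.cos_coe, not_or, Real.cos_neg]
        constructor <;>
          · rw [Real.cos_pi_div_four]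
            positivity
      rw [Set.indicator_of_notMem h0]
    · rw [if_neg hyB]
      have hfin : ({((π/2:ℝ):Spin) - ((π/4:ℝ):Spin), ((-π/2:ℝ):Spin) - ((π/4:ℝ):Spin),
          ((π/2:ℝ):Spin) + ((π/4:ℝ):Spin), ((-π/2:ℝ):Spin) + ((π/4:ℝ):Spin)} :
            Set Spin).Finite := Set.toFinite _
      refine measure_mono_null (fun u hu => ?_) (hfin.measure_zero volume)
      simp only [Set.mem_insert_iff, Set.mem_singleton_iff]
      rcases hu with h | h
      · rcases Real.Angle.cos_eq_zero_iff.1 h with h' | h'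
        · exact Or.inl (eq_sub_iff_add_eq.2 h')
        · exact Or.inr (Or.inl (eq_sub_iff_add_eq.2 h'))
      · rcases Real.Angle.cos_eq_zero_iff.1 h with h' | h'
        · exact Or.inr (Or.inr (Or.inl (eq_add_of_sub_eq h')))
        · exact Or.inr (Or.inr (Or.inr (eq_add_of_sub_eq h')))
  have hbase : ∀ᵐ θ ∂(spinBase B),
      ∀ y : V, ((θ y) + ((π/4:ℝ):Spin)).cos ≠ 0 ∧ ((θ y) - ((π/4:ℝ):Spin)).cos ≠ 0 := by
    rw [ae_all_iff]
    intro y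
    rw [ae_iff]
    refine measure_mono_null (fun θ hθ => ?_)
      (Measure.pi_eval_preimage_null _ (i := y) (s := bad) (hbadnull y))
    simp only [Set.mem_setOf_eq, not_and_or, not_not] at hθ
    exact hθ
  rw [ae_iff] at hbase ⊢
  have hset : {ω : (V → Spin) × ((Sym2 V → Bool) × (Sym2 V → Bool)) |
      ¬ ∀ y : V, ((ω.1 y) + ((π/4:ℝ):Spin)).cos ≠ 0 ∧ ((ω.1 y) - ((π/4:ℝ):Spin)).cos ≠ 0}
      = {θ : V → Spin |
        ¬ ∀ y : V, ((θ y) + ((π/4:ℝ):Spin)).cos ≠ 0 ∧ ((θ y) - ((π/4:ℝ):Spin)).cos ≠ 0} ×ˢ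
          Set.univ := by
    ext ω
    simp [Set.mem_prod]
  rw [hset, Measure.prod_prod, hbase, zero_mul]

end DensityAux

-- ### main abstract step

lemma flip_extP2_mp {V : Type} [Fintype V] [LinearOrder V]
    (G : SimpleGraph V) [DecidableRel G.Adj] (B : Finset V) (z : V)
    (r : Spin → Spin) (sel : (Sym2 V → Bool) × (Sym2 V → Bool) → Sym2 V → Bool)
    (hrm : Measurable r) (hrvol : MeasurePreserving r (volume : Measure Spin) volume)
    {W : Spin → ℝ} (hW : IsWeight W)
    (hae : ∀ᵐ ω ∂((spinBase B).prod
        (Measure.count : Measure ((Sym2 V → Bool) × (Sym2 V → Bool)))),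
      spinDensity G W (flipMap2 G B z r sel ω).1 *
          bondWeight2 G W (flipMap2 G B z r sel ω).1 (flipMap2 G B z r sel ω).2 =
        spinDensity G W ω.1 * bondWeight2 G W ω.1 ω.2) :
    MeasurePreserving (flipMap2 G B z r sel) (extP2 G W B) (extP2 G W B) := by
  have hTm := flipMap2_measurable G B z r sel hrm
  have hmp := flipMap2_base_mp G B z r sel hrm hrvol
  have hf := measurable_density G hW
  have key : Measure.map (flipMap2 G B z r sel) (extAux2 G W B) = extAux2 G W B := by
    unfold extAux2
    refine Measure.ext fun s hs => ?_
    rw [Measure.map_apply hTm hs, withDensity_apply _ (hTm hs), withDensity_apply _ hs]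
    calc
      ∫⁻ a in flipMap2 G B z r sel ⁻¹' s,
          spinDensity G W a.1 * bondWeight2 G W a.1 a.2
            ∂((spinBase B).prod Measure.count)
        = ∫⁻ a in flipMap2 G B z r sel ⁻¹' s,
            spinDensity G W (flipMap2 G B z r sel a).1 *
              bondWeight2 G W (flipMap2 G B z r sel a).1 (flipMap2 G B z r sel a).2
            ∂((spinBase B).prod Measure.count) :=
          lintegral_congr_ae (ae_restrict_of_ae (by filter_upwards [hae] with ω h; exact h.symm))
      _ = ∫⁻ a in s, spinDensity G W a.1 * bondWeight2 G W a.1 a.2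
            ∂((spinBase B).prod Measure.count) :=
          hmp.setLIntegral_comp_preimage hs hf
  refine ⟨hTm, ?_⟩
  unfold extP2
  rw [Measure.map_smul, key]

/-- In the two-cluster extended model `(u,e¹,e²)` with
boundary condition `1`, assuming the pointwise coupling constraints
`max(0,p+q-1) ≤ c ≤ min(p,q)`, the maps `σ̄_1^z` (reflecting the `C₁`-cluster
of `z` by `R₁ : θ ↦ π/2 - θ`) and `σ̄_2^z` (reflecting the `C₂`-cluster of `z`
by `R₂ : θ ↦ -π/2 - θ`) both preserve the joint law of `(u,e¹,e²)`. -/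
theorem statement_4 {V : Type} [Fintype V] [LinearOrder V]
    (G : SimpleGraph V) [DecidableRel G.Adj] (hG : G.Connected)
    (B : Finset V) (hB : B.Nonempty)
    (W : Spin → ℝ) (hW : IsWeight W)
    (hc : ∀ u₁ u₂ : Spin,
      max 0 (pBond2 W u₁ u₂ + qBond2 W u₁ u₂ - 1) ≤ cBond2 W u₁ u₂ ∧
      cBond2 W u₁ u₂ ≤ min (pBond2 W u₁ u₂) (qBond2 W u₁ u₂))
    (z : V) :
    MeasurePreserving (flipMap2 G B z (fun u => ((π / 2 : ℝ) : Spin) - u) Prod.fst)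
        (extP2 G W B) (extP2 G W B) ∧
      MeasurePreserving (flipMap2 G B z (fun u => ((-(π / 2) : ℝ) : Spin) - u) Prod.snd)
        (extP2 G W B) (extP2 G W B) := by
  constructor
  · refine flip_extP2_mp G B z (fun u => ((π / 2 : ℝ) : Spin) - u) Prod.fst
      (show Measurable fun u : Spin => ((π / 2 : ℝ) : Spin) - u from
        (continuous_sub_left _).measurable)
      (Measure.measurePreserving_sub_left volume _) hW ?_
    filter_upwards [good_ae B] with ω hω
    rw [flipMap2_snd G B z (fun u => ((π / 2 : ℝ) : Spin) - u) Prod.fst ω]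
    exact density_flip1 G B z hW ω.1 (fun y => (hω y).1) ω.2
  · refine flip_extP2_mp G B z (fun u => ((-(π / 2) : ℝ) : Spin) - u) Prod.snd
      (show Measurable fun u : Spin => ((-(π / 2) : ℝ) : Spin) - u from
        (continuous_sub_left _).measurable)
      (Measure.measurePreserving_sub_left volume _) hW ?_
    filter_upwards [good_ae B] with ω hω
    rw [flipMap2_snd G B z (fun u => ((-(π / 2) : ℝ) : Spin) - u) Prod.snd ω]
    exact density_flip2 G B z hW ω.1 (fun y => (hω y).2) ω.2

end
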